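/- arXiv:2103.11171 — 2 statements merged into one kernel-verified Lean document; each statement's English description precedes it below -/
import Mathlib

section
/- Let Q = T[H_1, …, H_t] be a digraph composition in which T is an acyclic digraph, and let q be a positive integer with q < ℓ(Q). Suppose that for each i ∈ [t] and each positive integer q_i with q_i < ℓ(H_i), there exists a partition (A_i, B_i) of V(H_i) such that ℓ(H_i[A_i]) ≤ q_i and ℓ(H_i[B_i]) ≤ ℓ(H_i) − q_i. Then there exists a partition (A, B) of V(Q) such that ℓ(Q[A]) ≤ q and ℓ(Q[B]) ≤ ℓ(Q) − q. -/
universe u v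

/-- There is a directed walk of length at most `n` from `x` to `y`. -/
def ReachIn {V : Type u} (A : V → V → Prop) : ℕ → V → V → Prop
  | 0 => fun x y => x = y
  | n + 1 => fun x y => x = y ∨ ∃ z, A x z ∧ ReachIn A n z y

/-- A digraph is strong if every vertex can reach every other vertex. -/
def IsStrong {V : Type u} (A : V → V → Prop) : Prop :=
  ∀ x y : V, Relation.ReflTransGen A x y

/-- A digraph is loopless if it has no loops. -/
def Loopless {V : Type u} (A : V → V → Prop) : Prop := ∀ x, ¬ A x x

/-- A digraph is semicomplete if there is at least one arc between any two distinct vertices. -/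
def Semicomplete {V : Type u} (A : V → V → Prop) : Prop :=
  ∀ x y : V, x ≠ y → A x y ∨ A y x

/-- The subdigraph induced on a set `s` of vertices. -/
def Restrict {V : Type u} (A : V → V → Prop) (s : Set V) :
    {v // v ∈ s} → {v // v ∈ s} → Prop := fun x y => A x.1 y.1

/-- `S` is a separator: deleting `S` leaves a non-strong digraph. -/
def IsSeparator {V : Type u} (A : V → V → Prop) (S : Set V) : Prop :=
  ¬ IsStrong (Restrict A Sᶜ)

/-- A digraph is `k`-strong-connected if every separator has at least `k` vertices. -/
def KStrong {V : Type u} (A : V → V → Prop) (k : ℕ) : Prop :=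
  ∀ S : Set V, IsSeparator A S → k ≤ S.ncard

/-- The composition `T[H₁, …, H_t]`. -/
def Comp {t : ℕ} (T : Fin t → Fin t → Prop) (V : Fin t → Type u)
    (H : ∀ i, V i → V i → Prop) : (Σ i, V i) → (Σ i, V i) → Prop :=
  fun p q => T p.1 q.1 ∨ ∃ h : p.1 = q.1, H q.1 (h ▸ p.2) q.2

/-- The complement of the underlying (simple) graph of a digraph. -/
def complUnderlying {V : Type u} (A : V → V → Prop) : SimpleGraph V where
  Adj x y := x ≠ y ∧ ¬ A x y ∧ ¬ A y x
  symm := ⟨fun x y ⟨h1, h2, h3⟩ => ⟨h1.symm, h3, h2⟩⟩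
  loopless := ⟨fun x h => h.1 rfl⟩

/-- `x` is a `k`-king: it reaches every vertex by a path of length at most `k`. -/
def IsKKing {V : Type u} (A : V → V → Prop) (k : ℕ) (x : V) : Prop :=
  ∀ y, ReachIn A k x y

/-- A (directed) path given as a list of vertices. -/
def IsPathList {V : Type u} (A : V → V → Prop) (l : List V) : Prop :=
  l.Nodup ∧ l.Chain' A

/-- A (directed) cycle given as a list of distinct vertices. -/
def IsCycleList {V : Type u} (A : V → V → Prop) (l : List V) : Prop :=
  2 ≤ l.length ∧ l.Nodup ∧ l.Chain' A ∧
    ∀ x ∈ l.getLast?, ∀ y ∈ l.head?, A x y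


/-- The number of vertices of a longest directed path of the digraph `A`. -/
noncomputable def pathOrd {V : Type u} (A : V → V → Prop) : ℕ :=
  sSup {n | ∃ l : List V, l.Nodup ∧ l.Chain' A ∧ l.length = n}

section Stmt14Aux

open List

variable {W : Type u}

theorem stmt14_pset_nonempty (A : W → W → Prop) :
    {n | ∃ l : List W, l.Nodup ∧ l.Chain' A ∧ l.length = n}.Nonempty :=
  ⟨0, [], by simp [List.Chain']⟩

theorem stmt14_pset_bdd [Fintype W] (A : W → W → Prop) :
    BddAbove {n | ∃ l : List W, l.Nodup ∧ l.Chain' A ∧ l.length = n} :=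
  ⟨Fintype.card W, fun n ⟨l, hn, _, hl⟩ => hl ▸ hn.length_le_card⟩

theorem stmt14_length_le_pathOrd [Fintype W] {A : W → W → Prop} {l : List W}
    (hn : l.Nodup) (hc : l.Chain' A) : l.length ≤ pathOrd A :=
  le_csSup (stmt14_pset_bdd A) ⟨l, hn, hc, rfl⟩

theorem stmt14_pathOrd_le {A : W → W → Prop} {m : ℕ}
    (h : ∀ l : List W, l.Nodup → l.Chain' A → l.length ≤ m) : pathOrd A ≤ m :=
  csSup_le (stmt14_pset_nonempty A) (fun n ⟨l, hn, hc, hl⟩ => hl ▸ h l hn hc)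

theorem stmt14_exists_pathOrd [Fintype W] (A : W → W → Prop) :
    ∃ l : List W, l.Nodup ∧ l.Chain' A ∧ l.length = pathOrd A :=
  Nat.sSup_mem (stmt14_pset_nonempty A) (stmt14_pset_bdd A)

theorem stmt14_one_le_pathOrd [Fintype W] [Nonempty W] (A : W → W → Prop) :
    1 ≤ pathOrd A := by
  have := stmt14_length_le_pathOrd (A := A) (l := [Classical.arbitrary W]) (by simp) (by simp [List.Chain'])
  simpa using this

theorem stmt14_length_le_pathOrd_restrict [Fintype W] {A : W → W → Prop} {s : Set W}
    {l : List W} (hn : l.Nodup) (hc : l.Chain' A) (hs : ∀ x ∈ l, x ∈ s) :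
    l.length ≤ pathOrd (Restrict A s) := by
  classical
  letI : Fintype {v // v ∈ s} := Fintype.ofFinite _
  let f : {x // x ∈ l} → {v // v ∈ s} := fun x => ⟨x.1, hs x.1 x.2⟩
  have hlen : (l.attach.map f).length = l.length := by simp
  refine hlen ▸ stmt14_length_le_pathOrd ?_ ?_
  · refine (nodup_attach.2 hn).map ?_
    intro a b hab
    exact Subtype.ext (congrArg (fun z : {v // v ∈ s} => z.1) hab)
  · rw [List.Chain', List.isChain_map]
    have h2 : Chain' A (l.attach.map Subtype.val) := by rwa [attach_map_subtype_val]
    rw [List.Chain', List.isChain_map] at h2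
    exact h2

theorem stmt14_pathOrd_restrict_le {A : W → W → Prop} {s : Set W} {m : ℕ}
    (h : ∀ l : List W, l.Nodup → l.Chain' A → (∀ x ∈ l, x ∈ s) → l.length ≤ m) :
    pathOrd (Restrict A s) ≤ m := by
  refine stmt14_pathOrd_le (fun l hn hc => ?_)
  have hmem : ∀ x ∈ l.map Subtype.val, x ∈ s := by
    rintro x hx
    obtain ⟨y, _, rfl⟩ := List.mem_map.1 hx
    exact y.2
  have := h (l.map Subtype.val) (hn.map Subtype.val_injective)
    ((List.isChain_map _).2 hc) hmem
  simpa using this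

theorem stmt14_rtg_of_chain' {A : W → W → Prop} :
    ∀ (l : List W), l.Chain' A → ∀ x ∈ l, ∀ y ∈ l.getLast?,
      Relation.ReflTransGen A x y := by
  intro l
  induction l with
  | nil => simp
  | cons z l ih =>
    intro hc x hx y hy
    cases l with
    | nil =>
      simp at hx hy
      subst hx; subst hy
      exact Relation.ReflTransGen.refl
    | cons w l' =>
      rw [List.Chain', List.isChain_cons_cons] at hc
      have hy' : y ∈ (w :: l').getLast? := by
        simpa [List.getLast?_cons_cons] using hy
      rcases List.mem_cons.1 hx with rfl | hx'
      · exact (ih hc.2 w List.mem_cons_self y hy').head hc.1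
      · exact ih hc.2 x hx' y hy'

end Stmt14Aux
section Stmt14Comp

open List

variable {t : ℕ} {T : Fin t → Fin t → Prop} {V : Fin t → Type u}
  {H : ∀ i, V i → V i → Prop}

theorem stmt14_comp_same (hTl : Loopless T) {i : Fin t} {a b : V i} :
    Comp T V H ⟨i, a⟩ ⟨i, b⟩ ↔ H i a b := by
  constructor
  · rintro (h | ⟨h, hH⟩)
    · exact absurd h (hTl i)
    · exact hH
  · intro h
    exact Or.inr ⟨rfl, h⟩

theorem stmt14_exists_map_sigma {i : Fin t} :
    ∀ (r : List (Σ j, V j)), (∀ x ∈ r, x.1 = i) →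
      ∃ m : List (V i), r = m.map (Sigma.mk i) := by
  intro r
  induction r with
  | nil => exact fun _ => ⟨[], rfl⟩
  | cons x r ih =>
    intro h
    obtain ⟨m, hm⟩ := ih (fun y hy => h y (List.mem_cons_of_mem _ hy))
    obtain ⟨i', v⟩ := x
    have hi : i' = i := h _ List.mem_cons_self
    subst hi
    exact ⟨v :: m, by rw [hm]; rfl⟩

theorem stmt14_block_decomp (hTl : Loopless T) (r : List (Σ j, V j)) (hne : r ≠ [])
    (hn : r.Nodup) (hc : r.Chain' (fun x y => Comp T V H y x)) :
    ∃ (i : Fin t) (m : List (V i)) (r₂ : List (Σ j, V j)),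
      r = m.map (Sigma.mk i) ++ r₂ ∧ m ≠ [] ∧
      m.Nodup ∧ m.reverse.Chain' (H i) ∧
      r₂.Nodup ∧ r₂.Chain' (fun x y => Comp T V H y x) ∧
      (∀ y ∈ r₂.head?, T y.1 i) ∧
      (∀ x ∈ r.head?, x.1 = i) := by
  classical
  set i := (r.head hne).1 with hi
  set p : (Σ j, V j) → Bool := fun x => decide (x.1 = i) with hp
  set r₁ := r.takeWhile p with hr₁
  set r₂ := r.dropWhile p with hr₂
  have hsplit : r = r₁ ++ r₂ := (List.takeWhile_append_dropWhile (p := p) (l := r)).symm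
  have hr₁mem : ∀ x ∈ r₁, x.1 = i := by
    intro x hx
    have := List.mem_takeWhile_imp hx
    simpa [hp] using this
  have hr₁ne : r₁ ≠ [] := by
    obtain ⟨x, r', rfl⟩ := List.exists_cons_of_ne_nil hne
    have hx : p x = true := by simp [hp, hi]
    rw [hr₁, List.takeWhile_cons_of_pos hx]
    simp
  obtain ⟨m, hm⟩ := stmt14_exists_map_sigma r₁ hr₁mem
  have hmne : m ≠ [] := by
    rintro rfl
    exact hr₁ne (by simpa using hm)
  have hcc : (r₁ ++ r₂).Chain' (fun x y => Comp T V H y x) := hsplit ▸ hc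
  rw [List.Chain', List.isChain_append] at hcc
  obtain ⟨hc₁, hc₂, hlink⟩ := hcc
  have hnn : (r₁ ++ r₂).Nodup := hsplit ▸ hn
  rw [List.nodup_append] at hnn
  refine ⟨i, m, r₂, hm ▸ hsplit, hmne, ?_, ?_, hnn.2.1, hc₂, ?_, ?_⟩
  · exact List.Nodup.of_map _ (hm ▸ hnn.1)
  · rw [List.Chain', List.isChain_reverse]
    have := (List.isChain_map (Sigma.mk i)).1 (hm ▸ hc₁)
    exact this.imp (fun a b hab => (stmt14_comp_same hTl).1 hab)
  · intro y hy
    have hr₂ne : r₂ ≠ [] := fun h => by simp [h] at hy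
    have hyh : y = r₂.head hr₂ne := by
      rw [List.head?_eq_head hr₂ne] at hy
      simpa using hy.symm
    have hyne : y.1 ≠ i := by
      have := List.head_dropWhile_not p (l := r) (by rwa [← hr₂])
      rw [hyh]
      simpa [hp, hr₂] using this
    have hx := List.getLast?_eq_getLast hr₁ne
    have hxmem := List.getLast_mem hr₁ne
    have harc := hlink _ (Option.mem_def.mpr hx) y hy
    have hxi : (r₁.getLast hr₁ne).1 = i := hr₁mem _ hxmem
    rcases harc with h | ⟨h, _⟩
    · rwa [hxi] at h
    · exact absurd (hxi ▸ h) hyne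
  · intro x hx
    obtain ⟨z, r', rfl⟩ := List.exists_cons_of_ne_nil hne
    simp only [List.head?_cons, Option.mem_def, Option.some_inj] at hx
    subst hx
    rfl

end Stmt14Comp
section Stmt14Claims

open List

variable {t : ℕ} {T : Fin t → Fin t → Prop} {V : Fin t → Type u}
  {H : ∀ i, V i → V i → Prop}

theorem stmt14_claimA (hTl : Loopless T) (q : ℕ) (lam a w : Fin t → ℕ)
    (s : Set (Σ j, V j))
    (hwa : ∀ i, a i + w i = lam i)
    (harc : ∀ i j, T i j → lam i ≤ a j)
    (hQ0 : ∀ (i : Fin t) (m : List (V i)), m.Nodup → m.Chain' (H i) → m.length ≤ w i)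
    (hQ1 : ∀ (i : Fin t) (m : List (V i)), m.Nodup → m.Chain' (H i) →
      (∀ x ∈ m, (⟨i, x⟩ : Σ j, V j) ∈ s) → m.length ≤ q - a i) :
    ∀ (n : ℕ) (r : List (Σ j, V j)), r.length ≤ n → r.Nodup →
      r.Chain' (fun x y => Comp T V H y x) → (∀ x ∈ r, x ∈ s) →
      ∀ x₀ ∈ r.head?, r.length ≤ min q (lam x₀.1) := by
  intro n
  induction n with
  | zero =>
    intro r hr _ _ _ x₀ hx₀
    cases r with
    | nil => simp at hx₀
    | cons z r => simp at hr
  | succ n ih =>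
    intro r hr hn hc hs x₀ hx₀
    have hne : r ≠ [] := fun h => by simp [h] at hx₀
    obtain ⟨i, m, r₂, hsplit, hmne, hmn, hmc, h2n, h2c, hT2, hhead⟩ :=
      stmt14_block_decomp hTl r hne hn hc
    have hix : x₀.1 = i := hhead x₀ hx₀
    have hm0 : m.reverse.length ≤ w i := hQ0 i m.reverse (nodup_reverse.2 hmn) hmc
    have hm1 : m.length ≤ w i := by simpa using hm0
    have hm2 : m.length ≤ q - a i := by
      have := hQ1 i m.reverse (nodup_reverse.2 hmn) hmc (by
        intro x hx
        apply hs
        rw [hsplit]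
        exact mem_append_left _ (mem_map_of_mem (by simpa using hx)))
      simpa using this
    have hmpos : 0 < m.length := length_pos_iff.2 hmne
    have hrlen : r.length = m.length + r₂.length := by rw [hsplit]; simp
    have hwai := hwa i
    rw [hix]
    rcases eq_or_ne r₂ [] with h2 | h2
    · subst h2
      simp only [length_nil] at hrlen
      omega
    · have hy := List.head?_eq_head h2
      set y₀ := r₂.head h2 with hy₀
      have hTy : T y₀.1 i := hT2 y₀ (Option.mem_def.mpr hy)
      have hlamy : lam y₀.1 ≤ a i := harc _ _ hTy
      have h2len : r₂.length ≤ n := by omega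
      have h2s : ∀ x ∈ r₂, x ∈ s := fun x hx => hs x (by rw [hsplit]; exact mem_append_right _ hx)
      have ihb := ih r₂ h2len h2n h2c h2s y₀ (Option.mem_def.mpr hy)
      omega

theorem stmt14_claimB (hTl : Loopless T) (q : ℕ) (lam a w : Fin t → ℕ)
    (s : Set (Σ j, V j))
    (hwa : ∀ i, a i + w i = lam i)
    (harc : ∀ i j, T i j → lam i ≤ a j)
    (hQ0 : ∀ (i : Fin t) (m : List (V i)), m.Nodup → m.Chain' (H i) → m.length ≤ w i)
    (hQ2 : ∀ (i : Fin t) (m : List (V i)), m.Nodup → m.Chain' (H i) →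
      (∀ x ∈ m, (⟨i, x⟩ : Σ j, V j) ∉ s) → m ≠ [] → m.length + q ≤ lam i) :
    ∀ (n : ℕ) (r : List (Σ j, V j)), r.length ≤ n → r.Nodup →
      r.Chain' (fun x y => Comp T V H y x) → (∀ x ∈ r, x ∉ s) →
      ∀ x₀ ∈ r.head?, r.length + q ≤ lam x₀.1 := by
  intro n
  induction n with
  | zero =>
    intro r hr _ _ _ x₀ hx₀
    cases r with
    | nil => simp at hx₀
    | cons z r => simp at hr
  | succ n ih =>
    intro r hr hn hc hs x₀ hx₀
    have hne : r ≠ [] := fun h => by simp [h] at hx₀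
    obtain ⟨i, m, r₂, hsplit, hmne, hmn, hmc, h2n, h2c, hT2, hhead⟩ :=
      stmt14_block_decomp hTl r hne hn hc
    have hix : x₀.1 = i := hhead x₀ hx₀
    have hm0 : m.reverse.length ≤ w i := hQ0 i m.reverse (nodup_reverse.2 hmn) hmc
    have hm1 : m.length ≤ w i := by simpa using hm0
    have hm2 : m.length + q ≤ lam i := by
      have := hQ2 i m.reverse (nodup_reverse.2 hmn) hmc (by
        intro x hx
        apply hs
        rw [hsplit]
        exact mem_append_left _ (mem_map_of_mem (by simpa using hx)))
        (by simpa using hmne)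
      simpa using this
    have hmpos : 0 < m.length := length_pos_iff.2 hmne
    have hrlen : r.length = m.length + r₂.length := by rw [hsplit]; simp
    have hwai := hwa i
    rw [hix]
    rcases eq_or_ne r₂ [] with h2 | h2
    · subst h2
      simp only [length_nil] at hrlen
      omega
    · have hy := List.head?_eq_head h2
      set y₀ := r₂.head h2 with hy₀
      have hTy : T y₀.1 i := hT2 y₀ (Option.mem_def.mpr hy)
      have hlamy : lam y₀.1 ≤ a i := harc _ _ hTy
      have h2len : r₂.length ≤ n := by omega
      have h2s : ∀ x ∈ r₂, x ∉ s := fun x hx => hs x (by rw [hsplit]; exact mem_append_right _ hx)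
      have ihb := ih r₂ h2len h2n h2c h2s y₀ (Option.mem_def.mpr hy)
      omega

theorem stmt14_comp_path [∀ i, Fintype (V i)] [∀ i, Nonempty (V i)] :
    ∀ l : List (Fin t), l.Nodup → l.Chain' T →
      ∃ P : List (Σ j, V j), P.Nodup ∧ P.Chain' (Comp T V H) ∧
        P.length = (l.map (fun i => pathOrd (H i))).sum ∧
        (∀ x ∈ P, x.1 ∈ l) ∧ (∀ x ∈ P.head?, ∀ j ∈ l.head?, x.1 = j) := by
  intro l
  induction l with
  | nil => exact fun _ _ => ⟨[], by simp [List.Chain']⟩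
  | cons j l ih =>
    intro hn hc
    rw [List.Chain', List.isChain_cons] at hc
    obtain ⟨P, hPn, hPc, hPl, hPmem, hPhead⟩ := ih (List.Nodup.of_cons hn) hc.2
    obtain ⟨Pj, hjn, hjc, hjlen⟩ := stmt14_exists_pathOrd (H j)
    have hjne : Pj ≠ [] := by
      have := stmt14_one_le_pathOrd (H j)
      intro h
      rw [h] at hjlen
      simp at hjlen
      omega
    refine ⟨Pj.map (Sigma.mk j) ++ P, ?_, ?_, ?_, ?_, ?_⟩
    · rw [List.nodup_append]
      refine ⟨hjn.map sigma_mk_injective, hPn, ?_⟩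
      intro x hx1 _ hx2 rfl
      have h1 : x.1 = j := by
        obtain ⟨v, _, rfl⟩ := List.mem_map.1 hx1
        rfl
      have h2 : x.1 ∈ l := hPmem x hx2
      rw [h1] at h2
      exact (List.nodup_cons.1 hn).1 h2
    · rw [List.Chain', List.isChain_append]
      refine ⟨?_, hPc, ?_⟩
      · rw [List.isChain_map]
        exact hjc.imp (fun a b hab => Or.inr ⟨rfl, hab⟩)
      · intro x hx y hy
        have hx1 : x.1 = j := by
          obtain ⟨v, _, rfl⟩ := List.mem_map.1 (List.mem_of_mem_getLast? hx)
          rfl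
        have hPne : P ≠ [] := fun h => by simp [h] at hy
        have hlne : l ≠ [] := by
          intro h
          subst h
          simp at hPl
          exact hPne hPl
        obtain ⟨j', l', rfl⟩ := List.exists_cons_of_ne_nil hlne
        have hy1 : y.1 = j' := hPhead y hy j' rfl
        refine Or.inl ?_
        rw [hx1, hy1]
        exact hc.1 j' rfl
    · simp [hjlen, hPl]
    · intro x hx
      rcases List.mem_append.1 hx with hx | hx
      · obtain ⟨v, _, rfl⟩ := List.mem_map.1 hx
        exact List.mem_cons_self
      · exact List.mem_cons_of_mem _ (hPmem x hx)
    · intro x hx j' hj'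
      obtain ⟨v, Pj', rfl⟩ := List.exists_cons_of_ne_nil hjne
      simp only [List.map_cons, List.cons_append, List.head?_cons, Option.mem_def,
        Option.some_inj] at hx hj'
      subst hx
      subst hj'
      rfl

end Stmt14Claims
/-- the Path Partition property for compositions `T[H₁,…,H_t]` with `T`
acyclic, provided each `H_i` satisfies the corresponding partition property. -/
theorem stmt14 {t : ℕ} (ht : 2 ≤ t) (V : Fin t → Type u) [∀ i, Fintype (V i)]
    [∀ i, Nonempty (V i)] (T : Fin t → Fin t → Prop) (H : ∀ i, V i → V i → Prop)
    (hTl : Loopless T) (hHl : ∀ i, Loopless (H i))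
    (hacyc : ∀ x : Fin t, ¬ Relation.TransGen T x x)
    (q : ℕ) (hq : 0 < q) (hql : q < pathOrd (Comp T V H))
    (hpart : ∀ (i : Fin t) (qi : ℕ), 0 < qi → qi < pathOrd (H i) →
      ∃ s : Set (V i), pathOrd (Restrict (H i) s) ≤ qi ∧
        pathOrd (Restrict (H i) sᶜ) ≤ pathOrd (H i) - qi) :
    ∃ s : Set (Σ i, V i), pathOrd (Restrict (Comp T V H) s) ≤ q ∧
      pathOrd (Restrict (Comp T V H) sᶜ) ≤ pathOrd (Comp T V H) - q := by
  classical
  set w : Fin t → ℕ := fun i => pathOrd (H i) with hw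
  set wset : Fin t → Set ℕ := fun i =>
    {n | ∃ l : List (Fin t), l.Nodup ∧ l.Chain' T ∧ l.getLast? = some i ∧
      (l.map w).sum = n} with hwset
  set lam : Fin t → ℕ := fun i => sSup (wset i) with hlam
  set a : Fin t → ℕ := fun i => lam i - w i with ha
  have hbdd : ∀ i, BddAbove (wset i) := by
    intro i
    refine ⟨∑ j, w j, ?_⟩
    rintro n ⟨l, hn, -, -, rfl⟩
    rw [← List.sum_toFinset w hn]
    exact Finset.sum_le_sum_of_subset (Finset.subset_univ _)
  have hmemw : ∀ i, w i ∈ wset i := fun i => ⟨[i], by simp, by simp [List.Chain'], by simp, by simp⟩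
  have hwlam : ∀ i, w i ≤ lam i := fun i => le_csSup (hbdd i) (hmemw i)
  have hw1 : ∀ i, 1 ≤ w i := fun i => stmt14_one_le_pathOrd (H i)
  have hwa : ∀ i, a i + w i = lam i := by
    intro i
    have := hwlam i
    have hai : a i = lam i - w i := rfl
    omega
  have harc : ∀ i j, T i j → lam i ≤ a j := by
    intro i j hT
    obtain ⟨l, hn, hc, hlast, hsum⟩ :
        ∃ l : List (Fin t), l.Nodup ∧ l.Chain' T ∧ l.getLast? = some i ∧
          (l.map w).sum = lam i := by
      have := Nat.sSup_mem ⟨w i, hmemw i⟩ (hbdd i)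
      rw [hlam]
      exact this
    have hjl : j ∉ l := by
      intro hjmem
      have hrtg := stmt14_rtg_of_chain' l hc j hjmem i (Option.mem_def.mpr hlast)
      exact hacyc j (Relation.TransGen.tail' hrtg hT)
    have hmem2 : lam i + w j ∈ wset j := by
      refine ⟨l ++ [j], ?_, ?_, ?_, ?_⟩
      · rw [List.nodup_append]
        refine ⟨hn, by simp, ?_⟩
        intro x hx y hx' hxy
        simp only [List.mem_singleton] at hx'
        subst hx'
        subst hxy
        exact hjl hx
      · rw [List.Chain', List.isChain_append]
        refine ⟨hc, by simp, ?_⟩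
        intro x hx y hy
        simp only [List.head?_cons, Option.mem_def, Option.some_inj] at hy
        rw [Option.mem_def, hlast, Option.some_inj] at hx
        subst hx
        subst hy
        exact hT
      · exact List.getLast?_concat
      · simp [hsum]
    have h2 : lam i + w j ≤ lam j := le_csSup (hbdd j) hmem2
    have := hwlam j
    have haj : a j = lam j - w j := rfl
    omega
  have hQ0 : ∀ (i : Fin t) (m : List (V i)), m.Nodup → m.Chain' (H i) →
      m.length ≤ w i := fun i m hn hc => stmt14_length_le_pathOrd hn hc
  have hlamL : ∀ i, lam i ≤ pathOrd (Comp T V H) := by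
    intro i
    obtain ⟨l, hn, hc, hlast, hsum⟩ :
        ∃ l : List (Fin t), l.Nodup ∧ l.Chain' T ∧ l.getLast? = some i ∧
          (l.map w).sum = lam i := by
      have := Nat.sSup_mem ⟨w i, hmemw i⟩ (hbdd i)
      rw [hlam]
      exact this
    obtain ⟨P, hPn, hPc, hPl, -, -⟩ := stmt14_comp_path (T := T) (V := V) (H := H) l hn hc
    calc lam i = P.length := by rw [hPl, ← hsum]
    _ ≤ pathOrd (Comp T V H) := stmt14_length_le_pathOrd hPn hPc
  have hsi : ∀ i : Fin t, ∃ si : Set (V i),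
      (∀ m : List (V i), m.Nodup → m.Chain' (H i) → (∀ x ∈ m, x ∈ si) →
        m.length ≤ q - a i) ∧
      (∀ m : List (V i), m.Nodup → m.Chain' (H i) → (∀ x ∈ m, x ∉ si) → m ≠ [] →
        m.length + q ≤ lam i) := by
    intro i
    have hwai := hwa i
    by_cases h1 : lam i ≤ q
    · refine ⟨Set.univ, fun m hn hc _ => ?_, fun m _ _ hm hne => ?_⟩
      · have := hQ0 i m hn hc
        omega
      · obtain ⟨x, m', rfl⟩ := List.exists_cons_of_ne_nil hne
        exact absurd (Set.mem_univ x) (hm x List.mem_cons_self)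
    · by_cases h2 : q ≤ a i
      · refine ⟨∅, fun m hn hc hm => ?_, fun m hn hc _ _ => ?_⟩
        · cases m with
          | nil => simp
          | cons x m' => exact absurd (hm x List.mem_cons_self) (by simp)
        · have := hQ0 i m hn hc
          omega
      · have hwi : pathOrd (H i) = w i := by rw [hw]
        obtain ⟨si, hA, hB⟩ := hpart i (q - a i) (by omega) (by omega)
        refine ⟨si, fun m hn hc hm => ?_, fun m hn hc hm hne => ?_⟩
        · exact (stmt14_length_le_pathOrd_restrict hn hc hm).trans hA
        · have h3 := (stmt14_length_le_pathOrd_restrict hn hc hm).trans hB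
          omega
  choose si hQ1 hQ2 using hsi
  set s : Set (Σ j, V j) := {x | x.2 ∈ si x.1} with hs
  have hQ1' : ∀ (i : Fin t) (m : List (V i)), m.Nodup → m.Chain' (H i) →
      (∀ x ∈ m, (⟨i, x⟩ : Σ j, V j) ∈ s) → m.length ≤ q - a i := hQ1
  have hQ2' : ∀ (i : Fin t) (m : List (V i)), m.Nodup → m.Chain' (H i) →
      (∀ x ∈ m, (⟨i, x⟩ : Σ j, V j) ∉ s) → m ≠ [] → m.length + q ≤ lam i := hQ2
  refine ⟨s, ?_, ?_⟩
  · refine stmt14_pathOrd_restrict_le (fun l hn hc hm => ?_)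
    rcases eq_or_ne l [] with rfl | hne
    · simp
    · have hrne : l.reverse ≠ [] := by simpa using hne
      have hrc : l.reverse.Chain' (fun x y => Comp T V H y x) := by
        rw [List.Chain', List.isChain_reverse]
        exact hc
      have hrm : ∀ x ∈ l.reverse, x ∈ s := fun x hx => hm x (List.mem_reverse.1 hx)
      have hhd := List.head?_eq_head hrne
      have hcl := stmt14_claimA hTl q lam a w s hwa harc hQ0 hQ1'
        l.reverse.length l.reverse le_rfl (List.nodup_reverse.2 hn) hrc hrm
        _ (Option.mem_def.mpr hhd)
      have : l.reverse.length = l.length := List.length_reverse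
      omega
  · refine stmt14_pathOrd_restrict_le (fun l hn hc hm => ?_)
    rcases eq_or_ne l [] with rfl | hne
    · simp
    · have hrne : l.reverse ≠ [] := by simpa using hne
      have hrc : l.reverse.Chain' (fun x y => Comp T V H y x) := by
        rw [List.Chain', List.isChain_reverse]
        exact hc
      have hrm : ∀ x ∈ l.reverse, x ∉ s := fun x hx => hm x (List.mem_reverse.1 hx)
      have hhd := List.head?_eq_head hrne
      have hcl := stmt14_claimB hTl q lam a w s hwa harc hQ0 hQ2'
        l.reverse.length l.reverse le_rfl (List.nodup_reverse.2 hn) hrc hrm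
        _ (Option.mem_def.mpr hhd)
      have h5 := hlamL (l.reverse.head hrne).1
      have : l.reverse.length = l.length := List.length_reverse
      omega
end

section
/- Let Q = T[H_1, …, H_t] with t ≥ 2, where T is a strong digraph and H_1, …, H_t are arbitrary digraphs each having at least two vertices. Then for every vertex r of Q, the digraph Q has an out-branching rooted at r and an in-branching rooted at r which are arc-disjoint. -/
universe u v

/-- `B` is an out-branching of the digraph `A` rooted at `r`. -/
def IsOutBranching {V : Type u} (A B : V → V → Prop) (r : V) : Prop :=
  (∀ x y, B x y → A x y) ∧ (∀ v, v ≠ r → ∃! u, B u v) ∧ (∀ u, ¬ B u r) ∧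
    ∀ v, Relation.ReflTransGen B r v

/-- `B` is an in-branching of the digraph `A` rooted at `r`. -/
def IsInBranching {V : Type u} (A B : V → V → Prop) (r : V) : Prop :=
  (∀ x y, B x y → A x y) ∧ (∀ v, v ≠ r → ∃! u, B v u) ∧ (∀ u, ¬ B r u) ∧
    ∀ v, Relation.ReflTransGen B v r

lemma reachIn_tail {V : Type u} {A : V → V → Prop} :
    ∀ {n : ℕ} {x y z : V}, ReachIn A n x y → A y z → ReachIn A (n + 1) x z := by
  intro n
  induction n with
  | zero =>
    intro x y z h ha
    subst h
    exact Or.inr ⟨z, ha, rfl⟩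
  | succ n ih =>
    intro x y z h ha
    rcases h with rfl | ⟨w, hxw, hw⟩
    · exact Or.inr ⟨z, ha, Or.inl rfl⟩
    · exact Or.inr ⟨w, hxw, ih hw ha⟩

lemma exists_reachIn {V : Type u} {A : V → V → Prop} {x y : V}
    (h : Relation.ReflTransGen A x y) : ∃ n, ReachIn A n x y := by
  induction h with
  | refl => exact ⟨0, rfl⟩
  | tail _ ha ih =>
    obtain ⟨n, hn⟩ := ih
    exact ⟨n + 1, reachIn_tail hn ha⟩

lemma exists_step {V : Type u} (A : V → V → Prop) (r : V)
    (h : ∀ p, Relation.ReflTransGen A p r) :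
    ∃ (step : V → V) (d : V → ℕ), ∀ p, p ≠ r → A p (step p) ∧ d (step p) < d p := by
  classical
  have hd : ∀ p, ∃ n, ReachIn A n p r := fun p => exists_reachIn (h p)
  have hstep : ∀ p, p ≠ r → ∃ z, A p z ∧ Nat.find (hd z) < Nat.find (hd p) := by
    intro p hp
    have h1 := Nat.find_spec (hd p)
    cases hn : Nat.find (hd p) with
    | zero =>
      rw [hn] at h1
      exact absurd h1 hp
    | succ m =>
      rw [hn] at h1
      rcases h1 with h1 | ⟨z, haz, hz⟩
      · exact absurd h1 hp
      · exact ⟨z, haz, by have h2 : Nat.find (hd z) ≤ m := Nat.find_le hz; omega⟩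
  refine ⟨fun p => if hp : p = r then p else Classical.choose (hstep p hp),
    fun p => Nat.find (hd p), fun p hp => ?_⟩
  simp only [dif_neg hp]
  exact Classical.choose_spec (hstep p hp)

/-- The explicit out-branching used in the proof of `stmt18`. -/
def OutB {t : ℕ} (V : Fin t → Type u) (i₀ : Fin t) (v₀ : V i₀) (Fpar : Fin t → Fin t)
    (k : Fin t) (a b : ∀ i, V i) : (Σ i, V i) → (Σ i, V i) → Prop := fun x y =>
  (y.1 ≠ i₀ ∧ y.2 ≠ b y.1 ∧ x = ⟨Fpar y.1, a (Fpar y.1)⟩) ∨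
  (y.1 ≠ i₀ ∧ y.2 = b y.1 ∧ x = ⟨Fpar y.1, b (Fpar y.1)⟩) ∨
  (y.1 = i₀ ∧ y ≠ ⟨i₀, v₀⟩ ∧ x = ⟨k, a k⟩)

open Classical in
/-- The successor function of the explicit in-branching used in the proof of `stmt18`. -/
noncomputable def InF {t : ℕ} (V : Fin t → Type u) (i₀ : Fin t) (v₀ : V i₀)
    (Gsucc Fpar : Fin t → Fin t) (j : Fin t) (a b : ∀ i, V i) :
    (Σ i, V i) → (Σ i, V i) := fun x =>
  if x.1 = i₀ then ⟨j, a j⟩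
  else if Gsucc x.1 = i₀ then ⟨i₀, v₀⟩
  else if x.2 = a x.1 then
    (if Fpar (Gsucc x.1) = x.1 then ⟨Gsucc x.1, b (Gsucc x.1)⟩ else ⟨Gsucc x.1, a (Gsucc x.1)⟩)
  else if x.2 = b x.1 then
    (if Fpar (Gsucc x.1) = x.1 then ⟨Gsucc x.1, a (Gsucc x.1)⟩ else ⟨Gsucc x.1, b (Gsucc x.1)⟩)
  else ⟨Gsucc x.1, b (Gsucc x.1)⟩

/-- If `T` is strong and each `H_i` has at least two vertices, then
`Q = T[H₁,…,H_t]` has arc-disjoint out- and in-branchings rooted at every vertex. -/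
theorem stmt18 {t : ℕ} (ht : 2 ≤ t) (V : Fin t → Type u) [∀ i, Fintype (V i)]
    [∀ i, Nonempty (V i)] (T : Fin t → Fin t → Prop) (H : ∀ i, V i → V i → Prop)
    (hTl : Loopless T) (hHl : ∀ i, Loopless (H i))
    (hTstrong : IsStrong T) (hsize : ∀ i, 2 ≤ Fintype.card (V i)) :
    ∀ r : Σ i, V i, ∃ B₁ B₂ : (Σ i, V i) → (Σ i, V i) → Prop,
      IsOutBranching (Comp T V H) B₁ r ∧ IsInBranching (Comp T V H) B₂ r ∧
      ∀ x y, B₁ x y → ¬ B₂ x y := by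
  classical
  rintro ⟨i₀, v₀⟩
  -- a spanning "out-tree" (parent function Fpar) and "in-tree" (successor Gsucc) of T rooted at i₀
  obtain ⟨Fpar, dF, hF⟩ := exists_step (Function.swap T) i₀
    (fun p => Relation.ReflTransGen.swap _ _ (hTstrong i₀ p))
  obtain ⟨Gsucc, dG, hG⟩ := exists_step T i₀ (fun p => hTstrong p i₀)
  -- an out-neighbour j and an in-neighbour k of i₀ in T
  obtain ⟨p₁, hp₁⟩ := Fintype.exists_ne_of_one_lt_card (α := Fin t)
    (by simp only [Fintype.card_fin]; omega) i₀
  obtain ⟨k, hk⟩ : ∃ k, T k i₀ := by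
    rcases (hTstrong p₁ i₀).cases_tail with heq | ⟨k, -, hk⟩
    · exact absurd heq.symm hp₁
    · exact ⟨k, hk⟩
  obtain ⟨j, hj⟩ : ∃ j, T i₀ j := by
    rcases (hTstrong i₀ p₁).cases_head with heq | ⟨j, hj, -⟩
    · exact absurd heq.symm hp₁
    · exact ⟨j, hj⟩
  have hk0 : k ≠ i₀ := fun h => hTl i₀ (h ▸ hk)
  have hj0 : j ≠ i₀ := fun h => hTl i₀ (h ▸ hj)
  -- two distinct representatives a i ≠ b i in every class, with a i₀ = v₀
  let a : ∀ i, V i := Function.update (fun i => Classical.arbitrary (V i)) i₀ v₀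
  have ha0 : a i₀ = v₀ := Function.update_self _ _ _
  have hbex : ∀ i, ∃ w : V i, w ≠ a i :=
    fun i => Fintype.exists_ne_of_one_lt_card (by have := hsize i; omega) (a i)
  let b : ∀ i, V i := fun i => Classical.choose (hbex i)
  have hab : ∀ i, b i ≠ a i := fun i => Classical.choose_spec (hbex i)
  have hmkne : ∀ {i : Fin t} {u w : V i}, u ≠ w → (⟨i, u⟩ : Σ i, V i) ≠ ⟨i, w⟩ := by
    intro i u w h he
    injection he with h1 h2
    exact h h2
  have hbne : ∀ i : Fin t, (⟨i, b i⟩ : Σ i, V i) ≠ ⟨i, a i⟩ := fun i => hmkne (hab i)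
  have hbr : (⟨i₀, b i₀⟩ : Σ i, V i) ≠ ⟨i₀, v₀⟩ := ha0 ▸ hbne i₀
  -- basic facts about the out-branching
  have hB₁r : ∀ u, ¬ OutB V i₀ v₀ Fpar k a b u ⟨i₀, v₀⟩ := by
    intro u h
    simp only [OutB] at h
    rcases h with ⟨h1, -, -⟩ | ⟨h1, -, -⟩ | ⟨-, h2, -⟩
    · exact h1 rfl
    · exact h1 rfl
    · exact h2 rfl
  have reachA : ∀ n (p : Fin t), dF p ≤ n →
      Relation.ReflTransGen (OutB V i₀ v₀ Fpar k a b) ⟨i₀, v₀⟩ ⟨p, a p⟩ := by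
    intro n
    induction n with
    | zero =>
      intro p hp
      by_cases h : p = i₀
      · subst h
        rw [ha0]
      · exact absurd (lt_of_lt_of_le (hF p h).2 hp) (Nat.not_lt_zero _)
    | succ n ih =>
      intro p hp
      by_cases h : p = i₀
      · subst h
        rw [ha0]
      · refine Relation.ReflTransGen.tail (ih (Fpar p) ?_) ?_
        · have := (hF p h).2; omega
        · exact Or.inl ⟨h, fun he => hab p he.symm, rfl⟩
  have reachBi : Relation.ReflTransGen (OutB V i₀ v₀ Fpar k a b) ⟨i₀, v₀⟩ ⟨i₀, b i₀⟩ :=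
    (reachA (dF k) k le_rfl).tail (Or.inr (Or.inr ⟨rfl, hbr, rfl⟩))
  have reachB : ∀ n (p : Fin t), dF p ≤ n →
      Relation.ReflTransGen (OutB V i₀ v₀ Fpar k a b) ⟨i₀, v₀⟩ ⟨p, b p⟩ := by
    intro n
    induction n with
    | zero =>
      intro p hp
      by_cases h : p = i₀
      · subst h; exact reachBi
      · exact absurd (lt_of_lt_of_le (hF p h).2 hp) (Nat.not_lt_zero _)
    | succ n ih =>
      intro p hp
      by_cases h : p = i₀
      · subst h; exact reachBi
      · refine Relation.ReflTransGen.tail (ih (Fpar p) ?_) ?_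
        · have := (hF p h).2; omega
        · exact Or.inr (Or.inl ⟨h, rfl, rfl⟩)
  -- evaluation facts for the in-branching successor function
  have hInF0 : ∀ (v : V i₀), InF V i₀ v₀ Gsucc Fpar j a b ⟨i₀, v⟩ = ⟨j, a j⟩ := by
    intro v
    show (if (i₀ : Fin t) = i₀ then _ else _) = _
    rw [if_pos rfl]
  have hInFr : ∀ (q : Fin t) (v : V q), q ≠ i₀ → Gsucc q = i₀ →
      InF V i₀ v₀ Gsucc Fpar j a b ⟨q, v⟩ = ⟨i₀, v₀⟩ := by
    intro q v hq hgi
    show (if q = i₀ then _ else _) = _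
    rw [if_neg hq, if_pos hgi]
  have hInFs : ∀ (q : Fin t) (v : V q), q ≠ i₀ → Gsucc q ≠ i₀ →
      ∃ w, InF V i₀ v₀ Gsucc Fpar j a b ⟨q, v⟩ = ⟨Gsucc q, w⟩ := by
    intro q v hq hgi
    show (∃ w, (if q = i₀ then _ else _) = _)
    rw [if_neg hq, if_neg hgi]
    split_ifs <;> exact ⟨_, rfl⟩
  refine ⟨OutB V i₀ v₀ Fpar k a b,
    fun x y => x ≠ ⟨i₀, v₀⟩ ∧ y = InF V i₀ v₀ Gsucc Fpar j a b x,
    ⟨?_, ?_, hB₁r, ?_⟩, ⟨?_, ?_, ?_, ?_⟩, ?_⟩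
  -- 1. B₁ is a subdigraph of Comp
  · intro x y h
    simp only [OutB] at h
    rcases h with ⟨h1, -, rfl⟩ | ⟨h1, -, rfl⟩ | ⟨h1, -, rfl⟩
    · exact Or.inl (hF y.1 h1).1
    · exact Or.inl (hF y.1 h1).1
    · exact Or.inl (by rw [h1]; exact hk)
  -- 2. every non-root vertex has a unique in-neighbour in B₁
  · rintro ⟨p, w⟩ hv
    by_cases hp : p = i₀
    · subst hp
      refine ⟨⟨k, a k⟩, Or.inr (Or.inr ⟨rfl, hv, rfl⟩), ?_⟩
      intro u hu
      simp only [OutB] at hu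
      rcases hu with ⟨h1, -, -⟩ | ⟨h1, -, -⟩ | ⟨-, -, rfl⟩
      · exact absurd rfl h1
      · exact absurd rfl h1
      · rfl
    · by_cases hw : w = b p
      · subst hw
        refine ⟨⟨Fpar p, b (Fpar p)⟩, Or.inr (Or.inl ⟨hp, rfl, rfl⟩), ?_⟩
        intro u hu
        simp only [OutB] at hu
        rcases hu with ⟨-, h2, -⟩ | ⟨-, -, rfl⟩ | ⟨h1, -, -⟩
        · exact absurd rfl h2
        · rfl
        · exact absurd h1 hp
      · refine ⟨⟨Fpar p, a (Fpar p)⟩, Or.inl ⟨hp, hw, rfl⟩, ?_⟩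
        intro u hu
        simp only [OutB] at hu
        rcases hu with ⟨-, -, rfl⟩ | ⟨-, h2, -⟩ | ⟨h1, -, -⟩
        · rfl
        · exact absurd h2 hw
        · exact absurd h1 hp
  -- 3. every vertex is reachable from the root in B₁
  · rintro ⟨p, w⟩
    by_cases hp : p = i₀
    · subst hp
      by_cases hw : w = v₀
      · subst hw
        exact Relation.ReflTransGen.refl
      · exact (reachA (dF k) k le_rfl).tail (Or.inr (Or.inr ⟨rfl, hmkne hw, rfl⟩))
    · by_cases hw : w = b p
      · subst hw; exact reachB (dF p) p le_rfl
      · exact (reachA (dF (Fpar p)) (Fpar p) le_rfl).tail (Or.inl ⟨hp, hw, rfl⟩)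
  -- 4. B₂ is a subdigraph of Comp
  · rintro ⟨q, v⟩ y ⟨hx, rfl⟩
    refine Or.inl ?_
    by_cases hq : q = i₀
    · subst hq
      rw [hInF0 v]
      exact hj
    · by_cases hgi : Gsucc q = i₀
      · rw [hInFr q v hq hgi]
        exact hgi ▸ (hG q hq).1
      · obtain ⟨w, hw⟩ := hInFs q v hq hgi
        rw [hw]
        exact (hG q hq).1
  -- 5. every non-root vertex has a unique out-neighbour in B₂
  · intro v hv
    exact ⟨InF V i₀ v₀ Gsucc Fpar j a b v, ⟨hv, rfl⟩, fun u hu => hu.2⟩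
  -- 6. no arc leaves the root in B₂
  · rintro u ⟨h, -⟩
    exact h rfl
  -- 7. every vertex reaches the root in B₂
  · have key : ∀ n (q : Fin t) (v : V q), q ≠ i₀ → dG q ≤ n →
        Relation.ReflTransGen
          (fun x y => x ≠ (⟨i₀, v₀⟩ : Σ i, V i) ∧ y = InF V i₀ v₀ Gsucc Fpar j a b x)
          ⟨q, v⟩ ⟨i₀, v₀⟩ := by
      intro n
      induction n with
      | zero =>
        intro q v hq hn
        exact absurd (lt_of_lt_of_le (hG q hq).2 hn) (Nat.not_lt_zero _)
      | succ n ih =>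
        intro q v hq hn
        have hne : (⟨q, v⟩ : Σ i, V i) ≠ ⟨i₀, v₀⟩ := fun he => hq (congrArg Sigma.fst he)
        by_cases hgi : Gsucc q = i₀
        · exact Relation.ReflTransGen.single ⟨hne, (hInFr q v hq hgi).symm⟩
        · obtain ⟨w, hw⟩ := hInFs q v hq hgi
          refine Relation.ReflTransGen.head ⟨hne, rfl⟩ ?_
          rw [hw]
          refine ih (Gsucc q) w hgi ?_
          have := (hG q hq).2; omega
    rintro ⟨q, v⟩
    by_cases hq : q = i₀
    · subst hq
      by_cases hw : v = v₀
      · subst hw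
        exact Relation.ReflTransGen.refl
      · refine Relation.ReflTransGen.head ⟨hmkne hw, rfl⟩ ?_
        rw [hInF0 v]
        exact key (dG j) j (a j) hj0 le_rfl
    · exact key (dG q) q v hq le_rfl
  -- 8. the two branchings are arc-disjoint
  · rintro ⟨q, v⟩ y h1 ⟨hxr, rfl⟩
    by_cases hq : q = i₀
    · subst hq
      rw [hInF0 v] at h1
      simp only [OutB] at h1
      rcases h1 with ⟨-, -, h4⟩ | ⟨-, h3, -⟩ | ⟨h3, -, -⟩
      · -- then ⟨i₀, v⟩ = ⟨Fpar j, a (Fpar j)⟩, so Fpar j = i₀ and v = a i₀ = v₀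
        injection h4 with h5 h6
        apply hxr
        rw [← h5] at h6
        rw [show v = v₀ from (eq_of_heq h6).trans ha0]
      · exact hab j h3.symm
      · exact hj0 h3
    · by_cases hgi : Gsucc q = i₀
      · rw [hInFr q v hq hgi] at h1
        exact hB₁r _ h1
      · by_cases hva : v = a q
        · by_cases hFp : Fpar (Gsucc q) = q
          · rw [show InF V i₀ v₀ Gsucc Fpar j a b ⟨q, v⟩ = ⟨Gsucc q, b (Gsucc q)⟩ from by
              show (if q = i₀ then _ else _) = _
              rw [if_neg hq, if_neg hgi, if_pos hva, if_pos hFp]] at h1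
            simp only [OutB] at h1
            rcases h1 with ⟨-, h3, -⟩ | ⟨-, -, h4⟩ | ⟨h3, -, -⟩
            · exact h3 rfl
            · rw [hFp] at h4
              injection h4 with h5 h6
              exact hab q (h6.symm.trans hva)
            · exact hgi h3
          · rw [show InF V i₀ v₀ Gsucc Fpar j a b ⟨q, v⟩ = ⟨Gsucc q, a (Gsucc q)⟩ from by
              show (if q = i₀ then _ else _) = _
              rw [if_neg hq, if_neg hgi, if_pos hva, if_neg hFp]] at h1
            simp only [OutB] at h1
            rcases h1 with ⟨-, -, h4⟩ | ⟨-, h3, -⟩ | ⟨h3, -, -⟩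
            · injection h4 with h5 h6
              exact hFp h5.symm
            · exact hab (Gsucc q) h3.symm
            · exact hgi h3
        · by_cases hvb : v = b q
          · by_cases hFp : Fpar (Gsucc q) = q
            · rw [show InF V i₀ v₀ Gsucc Fpar j a b ⟨q, v⟩ = ⟨Gsucc q, a (Gsucc q)⟩ from by
                show (if q = i₀ then _ else _) = _
                rw [if_neg hq, if_neg hgi, if_neg hva, if_pos hvb, if_pos hFp]] at h1
              simp only [OutB] at h1
              rcases h1 with ⟨-, -, h4⟩ | ⟨-, h3, -⟩ | ⟨h3, -, -⟩
              · rw [hFp] at h4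
                injection h4 with h5 h6
                exact hva h6
              · exact hab (Gsucc q) h3.symm
              · exact hgi h3
            · rw [show InF V i₀ v₀ Gsucc Fpar j a b ⟨q, v⟩ = ⟨Gsucc q, b (Gsucc q)⟩ from by
                show (if q = i₀ then _ else _) = _
                rw [if_neg hq, if_neg hgi, if_neg hva, if_pos hvb, if_neg hFp]] at h1
              simp only [OutB] at h1
              rcases h1 with ⟨-, h3, -⟩ | ⟨-, -, h4⟩ | ⟨h3, -, -⟩
              · exact h3 rfl
              · injection h4 with h5 h6
                exact hFp h5.symm
              · exact hgi h3
          · rw [show InF V i₀ v₀ Gsucc Fpar j a b ⟨q, v⟩ = ⟨Gsucc q, b (Gsucc q)⟩ from by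
              show (if q = i₀ then _ else _) = _
              rw [if_neg hq, if_neg hgi, if_neg hva, if_neg hvb]] at h1
            simp only [OutB] at h1
            rcases h1 with ⟨-, h3, -⟩ | ⟨-, -, h4⟩ | ⟨h3, -, -⟩
            · exact h3 rfl
            · injection h4 with h5 h6
              rw [← h5] at h6
              exact hvb (eq_of_heq h6)
            · exact hgi h3
end
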